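/- For the INMA(q₁,q₂) spread model, where the vector of counting-series indicators for each innovation individual is multinomial MULT(1; β₀₀,...,β_{q₁q₂}) with β_• ≤ 1, the autocovariance at lag (k,l) ≠ (0,0) equals γ(k,l) = (σ_ε² − μ_ε)·Σ_{(i,j)∈S₀₀∩S_{kl}} β_{i,j}β_{i−k,j−l}, where S_{kl} = {(i+k, j+l) : 0 ≤ i ≤ q₁, 0 ≤ j ≤ q₂}. -/

import Mathlib

open MeasureTheory ProbabilityTheory

/-- The lag set `S_{kl} = {(i+k, j+l) : 0 ≤ i ≤ q₁, 0 ≤ j ≤ q₂}` as a finite subset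
of `ℤ × ℤ`. -/
def lagWindow (q₁ q₂ : ℕ) (k l : ℤ) : Finset (ℤ × ℤ) :=
  (Finset.range (q₁ + 1) ×ˢ Finset.range (q₂ + 1)).image
    (fun p => ((p.1 : ℤ) + k, (p.2 : ℤ) + l))

open scoped ENNReal

lemma mem_lagWindow {q₁ q₂ : ℕ} {k l : ℤ} {p : ℤ × ℤ} :
    p ∈ lagWindow q₁ q₂ k l ↔ k ≤ p.1 ∧ p.1 ≤ q₁ + k ∧ l ≤ p.2 ∧ p.2 ≤ q₂ + l := by
  simp only [lagWindow, Finset.mem_image, Finset.mem_product, Finset.mem_range]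
  constructor
  · rintro ⟨⟨a, b⟩, ⟨ha, hb⟩, rfl⟩
    refine ⟨?_, ?_, ?_, ?_⟩ <;> (dsimp only; omega)
  · rintro ⟨h1, h2, h3, h4⟩
    refine ⟨((p.1 - k).toNat, (p.2 - l).toNat), ⟨?_, ?_⟩, ?_⟩
    · omega
    · omega
    · have e1 : (((p.1 - k).toNat : ℤ)) = p.1 - k := by omega
      have e2 : (((p.2 - l).toNat : ℤ)) = p.2 - l := by omega
      ext
      · simp only [e1]; omega
      · simp only [e2]; omega

lemma natCast_eq_tsum (n : ℕ) : (n : ℝ≥0∞) = ∑' r : ℕ, if r < n then 1 else 0 := by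
  rw [tsum_eq_sum (s := Finset.range n) (by intro b hb; simp at hb; simp [hb, Nat.not_lt.2 hb])]
  rw [Finset.sum_congr rfl fun b hb => if_pos (Finset.mem_range.1 hb)]
  simp

lemma lintegral_cast01 {Ω : Type*} [MeasurableSpace Ω] (μ : Measure Ω)
    (f : Ω → ℕ) (hf : Measurable f) (h01 : ∀ ω, f ω ≤ 1) :
    ∫⁻ ω, (f ω : ℝ≥0∞) ∂μ = μ {ω | f ω = 1} := by
  have h : (fun ω => (f ω : ℝ≥0∞)) = Set.indicator {ω | f ω = 1} (fun _ => 1) := by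
    ext ω
    by_cases h : f ω = 1
    · simp [Set.indicator_apply, h]
    · have h0 : f ω = 0 := by have := h01 ω; omega
      simp [Set.indicator_apply, h, h0]
  rw [lintegral_congr fun ω => congrFun h ω,
    lintegral_indicator (show MeasurableSet {ω | f ω = 1} from hf (measurableSet_singleton 1)) _,
    lintegral_one]
  simp [Measure.restrict_apply_univ]

lemma lintegral_natCast_eq_ofReal_integral {Ω : Type*} [MeasurableSpace Ω] (μ : Measure Ω)
    (f : Ω → ℕ) (hint : Integrable (fun ω => (f ω : ℝ)) μ) :
    ∫⁻ ω, (f ω : ℝ≥0∞) ∂μ = ENNReal.ofReal (∫ ω, (f ω : ℝ) ∂μ) := by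
  rw [ofReal_integral_eq_lintegral_ofReal hint (Filter.Eventually.of_forall fun ω => by positivity)]
  exact lintegral_congr fun ω => by rw [ENNReal.ofReal_natCast]

lemma measurable_sum_range {Ω : Type*} [MeasurableSpace Ω] (e : Ω → ℕ) (he : Measurable e)
    (f : ℕ → Ω → ℕ) (hf : ∀ r, Measurable (f r)) :
    Measurable (fun ω => ∑ r ∈ Finset.range (e ω), f r ω) := by
  intro s _
  have : (fun ω => ∑ r ∈ Finset.range (e ω), f r ω) ⁻¹' s
      = ⋃ m : ℕ, (e ⁻¹' {m}) ∩ ((fun ω => ∑ r ∈ Finset.range m, f r ω) ⁻¹' s) := by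
    ext ω
    simp only [Set.mem_preimage, Set.mem_iUnion, Set.mem_inter_iff, Set.mem_singleton_iff]
    constructor
    · intro h; exact ⟨e ω, rfl, h⟩
    · rintro ⟨m, rfl, h⟩; exact h
  rw [this]
  exact MeasurableSet.iUnion fun m =>
    (he (measurableSet_singleton m)).inter
      ((Finset.measurable_sum _ fun r _ => hf r) trivial)


/-- **Autocovariance of the INMA(q₁,q₂) spread model.**
In the INMA(q₁,q₂) spread model, the observation is
`X_{s,t} = ∑_{(i,j)∈S₀₀} ∑_{r<ε_{s−i,t−j}} Z_{s−i,t−j;r}^{(i,j)}`, where for each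
innovation individual the vector of counting-series indicators
`(Z^{(i,j)})_{(i,j)∈S₀₀}` is multinomial `MULT(1; β₀₀,…,β_{q₁q₂})` with `β_• ≤ 1`
(at most one component equal to one, component `(i,j)` with probability `β_{ij}`),
these vectors being i.i.d. across individuals and innovations and independent of the
i.i.d. innovations (mean `μ_ε`, variance `σ_ε²`). Then the autocovariance at any lag
`(k,l) ≠ (0,0)` equals
`γ(k,l) = (σ_ε² − μ_ε)·∑_{(i,j)∈S₀₀∩S_{kl}} β_{i,j} β_{i−k,j−l}`. -/
theorem INMA_spread_autocovariance
    {Ω : Type*} [MeasurableSpace Ω] (μ : Measure Ω) [IsProbabilityMeasure μ]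
    (q₁ q₂ : ℕ) (X : ℤ → ℤ → Ω → ℕ) (ε : ℤ × ℤ → Ω → ℕ)
    (Z : ℤ × ℤ → ℕ → ℤ × ℤ → Ω → ℕ)
    (β : ℤ × ℤ → ℝ)
    (hβ : ∀ p ∈ lagWindow q₁ q₂ 0 0, β p ∈ Set.Icc (0 : ℝ) 1)
    (hβsum : ∑ p ∈ lagWindow q₁ q₂ 0 0, β p ≤ 1)
    (hεmeas : ∀ uv, Measurable (ε uv))
    (hZmeas : ∀ uv r p, Measurable (Z uv r p))
    -- the counting-series indicators are `{0,1}`-valued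
    (hZ01 : ∀ uv r p ω, Z uv r p ω ≤ 1)
    -- spread model: for each individual, at most one indicator equals one
    (hspread : ∀ uv r ω, ∑ p ∈ lagWindow q₁ q₂ 0 0, Z uv r p ω ≤ 1)
    -- component `(i,j)` equals one with probability `β_{ij}`
    (hZlaw : ∀ uv r, ∀ p ∈ lagWindow q₁ q₂ 0 0,
      μ {ω | Z uv r p ω = 1} = ENNReal.ofReal (β p))
    -- the indicator vectors are independent across innovations and individuals
    (hZindep : iIndepFun
      (fun a : (ℤ × ℤ) × ℕ => fun ω => fun p : ℤ × ℤ => Z a.1 a.2 p ω) μ)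
    -- and identically distributed
    (hZident : ∀ a b : (ℤ × ℤ) × ℕ,
      Measure.map (fun ω => fun p : ℤ × ℤ => Z a.1 a.2 p ω) μ
        = Measure.map (fun ω => fun p : ℤ × ℤ => Z b.1 b.2 p ω) μ)
    -- the whole family of indicators is independent of the whole innovation field
    (hZε : IndepFun (fun ω => fun a : ((ℤ × ℤ) × ℕ) × (ℤ × ℤ) => Z a.1.1 a.1.2 a.2 ω)
      (fun ω => fun uv : ℤ × ℤ => ε uv ω) μ)
    -- the innovations are i.i.d. with mean `μ_ε`, variance `σ_ε²`, finite 2nd moment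
    (hεindep : iIndepFun ε μ)
    (hεident : ∀ uv uv' : ℤ × ℤ, Measure.map (ε uv) μ = Measure.map (ε uv') μ)
    (με σε2 : ℝ)
    (hεmom2 : ∀ uv, Integrable (fun ω => ((ε uv ω : ℝ)) ^ 2) μ)
    (hεmean : ∀ uv, ∫ ω, (ε uv ω : ℝ) ∂μ = με)
    (hεvar : ∀ uv, variance (fun ω => (ε uv ω : ℝ)) μ = σε2)
    -- the INMA(q₁,q₂) spread-model recursion
    (hrec : ∀ s t : ℤ, ∀ ω, X s t ω
      = ∑ p ∈ lagWindow q₁ q₂ 0 0,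
          ∑ r ∈ Finset.range (ε (s - p.1, t - p.2) ω), Z (s - p.1, t - p.2) r p ω)
    (hXmom2 : ∀ s t, Integrable (fun ω => ((X s t ω : ℝ)) ^ 2) μ) :
    ∀ s t k l : ℤ, ¬(k = 0 ∧ l = 0) →
      (∫ ω, (X s t ω : ℝ) * (X (s + k) (t + l) ω : ℝ) ∂μ)
          - (∫ ω, (X s t ω : ℝ) ∂μ) * (∫ ω, (X (s + k) (t + l) ω : ℝ) ∂μ)
        = (σε2 - με)
            * ∑ p ∈ lagWindow q₁ q₂ 0 0 ∩ lagWindow q₁ q₂ k l,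
                β p * β (p.1 - k, p.2 - l) := by
  intro s t k l hkl
  -- notation
  set W : Finset (ℤ × ℤ) := lagWindow q₁ q₂ 0 0 with hWdef
  -- the elementary summand in `ℝ≥0∞`
  set c : ℤ × ℤ → ℕ → ℤ × ℤ → Ω → ℝ≥0∞ :=
    fun v r p ω => (if r < ε v ω then 1 else 0) * (Z v r p ω : ℝ≥0∞) with hcdef
  set Y : ℤ → ℤ → ℤ × ℤ → Ω → ℝ≥0∞ :=
    fun a b p ω => ∑' r : ℕ, c (a - p.1, b - p.2) r p ω with hYdef
  -- measurability
  have hindmeas : ∀ (v : ℤ × ℤ) (r : ℕ),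
      Measurable (fun ω => (if r < ε v ω then (1:ℝ≥0∞) else 0)) :=
    fun v r => (measurable_from_top (f := fun n : ℕ => if r < n then (1:ℝ≥0∞) else 0)).comp
      (hεmeas v)
  have hZcastmeas : ∀ (v : ℤ × ℤ) (r : ℕ) (p : ℤ × ℤ),
      Measurable (fun ω => (Z v r p ω : ℝ≥0∞)) :=
    fun v r p => (measurable_from_top (f := fun n : ℕ => (n : ℝ≥0∞))).comp (hZmeas v r p)
  have hcmeas : ∀ v r p, Measurable (c v r p) := fun v r p => (hindmeas v r).mul (hZcastmeas v r p)
  have hYmeas : ∀ a b p, Measurable (Y a b p) := fun a b p =>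
    Measurable.ennreal_tsum fun r => hcmeas _ r p
  have hXmeas : ∀ a b, Measurable (X a b) := by
    intro a b
    have : X a b = fun ω => ∑ p ∈ W,
        ∑ r ∈ Finset.range (ε (a - p.1, b - p.2) ω), Z (a - p.1, b - p.2) r p ω :=
      funext fun ω => hrec a b ω
    rw [this]
    exact Finset.measurable_sum _ fun p _ =>
      measurable_sum_range _ (hεmeas _) _ (fun r => hZmeas _ r p)
  -- the basic cast identity
  have hXcast : ∀ a b ω, ((X a b ω : ℝ≥0∞)) = ∑ p ∈ W, Y a b p ω := by
    intro a b ω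
    rw [hrec a b ω]
    push_cast
    refine Finset.sum_congr rfl fun p hp => ?_
    show _ = ∑' r : ℕ, c (a - p.1, b - p.2) r p ω
    rw [tsum_eq_sum (s := Finset.range (ε (a - p.1, b - p.2) ω))
      (fun r hr => by
        simp only [Finset.mem_range, not_lt] at hr
        simp [hcdef, Nat.not_lt.2 hr])]
    · exact Finset.sum_congr rfl fun r hr => by
        simp [hcdef, Finset.mem_range.1 hr]
  -- integrability of X and ε in ℝ
  have hXint : ∀ a b, Integrable (fun ω => (X a b ω : ℝ)) μ := by
    intro a b
    refine Integrable.mono ((hXmom2 a b).add (integrable_const 1))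
      ((measurable_from_top (f := fun n : ℕ => (n : ℝ))).comp
        (hXmeas a b)).aestronglyMeasurable
      (Filter.Eventually.of_forall fun ω => ?_)
    have h0 : (0:ℝ) ≤ (X a b ω : ℝ) := by positivity
    simp only [Pi.add_apply]
    rw [Real.norm_eq_abs, Real.norm_eq_abs, abs_of_nonneg h0, abs_of_nonneg (by positivity)]
    nlinarith [sq_nonneg ((X a b ω : ℝ) - 1)]
  have hεint : ∀ v, Integrable (fun ω => (ε v ω : ℝ)) μ := by
    intro v
    refine Integrable.mono ((hεmom2 v).add (integrable_const 1))
      ((measurable_from_top (f := fun n : ℕ => (n : ℝ))).comp (hεmeas v)).aestronglyMeasurable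
      (Filter.Eventually.of_forall fun ω => ?_)
    have h0 : (0:ℝ) ≤ (ε v ω : ℝ) := by positivity
    simp only [Pi.add_apply]
    rw [Real.norm_eq_abs, Real.norm_eq_abs, abs_of_nonneg h0, abs_of_nonneg (by positivity)]
    nlinarith [sq_nonneg ((ε v ω : ℝ) - 1)]
  have hμε0 : 0 ≤ με := by
    rw [← hεmean (0, 0)]
    exact integral_nonneg fun ω => by positivity
  -- first and second moments of ε in ℝ≥0∞
  have hεlin : ∀ v, ∫⁻ ω, (ε v ω : ℝ≥0∞) ∂μ = ENNReal.ofReal με := by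
    intro v
    rw [lintegral_natCast_eq_ofReal_integral μ _ (hεint v), hεmean v]
  set m2R : ℝ := σε2 + με ^ 2 with hm2Rdef
  have hm2 : ∀ v, ∫ ω, ((ε v ω : ℝ)) ^ 2 ∂μ = m2R := by
    intro v
    have hmem : MemLp (fun ω => (ε v ω : ℝ)) 2 μ :=
      (memLp_two_iff_integrable_sq
        ((measurable_from_top (f := fun n : ℕ => (n : ℝ))).comp
          (hεmeas v)).aestronglyMeasurable).2 (hεmom2 v)
    have h := variance_eq_sub hmem
    rw [hεvar v, hεmean v] at h
    have h2 : ∫ ω, ((fun ω => (ε v ω : ℝ)) ^ 2) ω ∂μ = ∫ ω, ((ε v ω : ℝ)) ^ 2 ∂μ := rfl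
    rw [h2] at h
    rw [hm2Rdef]
    linarith
  have hm2_ge : με ≤ m2R := by
    rw [← hεmean (0, 0), ← hm2 (0, 0)]
    refine integral_mono (hεint (0, 0)) (hεmom2 (0, 0)) fun ω => ?_
    have : ε (0, 0) ω ≤ ε (0, 0) ω ^ 2 := Nat.le_self_pow two_ne_zero _
    show ((ε (0, 0) ω : ℕ) : ℝ) ≤ ((ε (0, 0) ω : ℕ) : ℝ) ^ 2
    exact_mod_cast this
  have hm2R0 : 0 ≤ m2R := le_trans hμε0 hm2_ge
  -- indicator integrals
  set P : ℤ × ℤ → ℕ → ℝ≥0∞ := fun v r => μ {ω | r < ε v ω} with hPdef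
  have hPint : ∀ v r, ∫⁻ ω, (if r < ε v ω then (1:ℝ≥0∞) else 0) ∂μ = P v r := by
    intro v r
    have h : (fun ω => (if r < ε v ω then (1:ℝ≥0∞) else 0))
        = Set.indicator {ω | r < ε v ω} (fun _ => 1) := by
      ext ω
      by_cases h : r < ε v ω <;> simp [Set.indicator_apply, h]
    rw [lintegral_congr fun ω => congrFun h ω,
      lintegral_indicator (show MeasurableSet {ω | r < ε v ω} from hεmeas v measurableSet_Ioi) _,
      lintegral_one]
    simp [hPdef, Measure.restrict_apply_univ]
  have hPsum : ∀ v, ∑' r : ℕ, P v r = ENNReal.ofReal με := by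
    intro v
    rw [tsum_congr fun r => (hPint v r).symm,
      ← lintegral_tsum fun r => (hindmeas v r).aemeasurable]
    rw [lintegral_congr fun ω => (natCast_eq_tsum (ε v ω)).symm]
    exact hεlin v
  -- second moment via double indicator sums
  set I2 : ℤ × ℤ → ℕ → ℕ → ℝ≥0∞ := fun v r r' =>
    ∫⁻ ω, (if r < ε v ω then (1:ℝ≥0∞) else 0) * (if r' < ε v ω then (1:ℝ≥0∞) else 0) ∂μ
    with hI2def
  have hεcastmeas : ∀ v, Measurable (fun ω => ((ε v ω : ℝ≥0∞))) :=
    fun v => (measurable_from_top (f := fun n : ℕ => (n : ℝ≥0∞))).comp (hεmeas v)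
  have hI2sum : ∀ v, ∑' (r : ℕ) (r' : ℕ), I2 v r r' = ENNReal.ofReal m2R := by
    intro v
    have step1 : ∀ r : ℕ, ∑' r' : ℕ, I2 v r r'
        = ∫⁻ ω, (if r < ε v ω then (1:ℝ≥0∞) else 0) * (ε v ω : ℝ≥0∞) ∂μ := by
      intro r
      rw [hI2def]
      rw [← lintegral_tsum (f := fun r' ω => (if r < ε v ω then (1:ℝ≥0∞) else 0) * (if r' < ε v ω then (1:ℝ≥0∞) else 0))
        fun r' => ((hindmeas v r).mul (hindmeas v r')).aemeasurable]
      refine lintegral_congr fun ω => ?_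
      rw [ENNReal.tsum_mul_left, ← natCast_eq_tsum]
    rw [tsum_congr step1,
      ← lintegral_tsum (f := fun r ω => (if r < ε v ω then (1:ℝ≥0∞) else 0) * (ε v ω : ℝ≥0∞))
        fun r => ((hindmeas v r).mul (hεcastmeas v)).aemeasurable]
    have step2 : ∫⁻ ω, ∑' r : ℕ, (if r < ε v ω then (1:ℝ≥0∞) else 0) * (ε v ω : ℝ≥0∞) ∂μ
        = ∫⁻ ω, ((ε v ω * ε v ω : ℕ) : ℝ≥0∞) ∂μ := by
      refine lintegral_congr fun ω => ?_
      rw [ENNReal.tsum_mul_right, ← natCast_eq_tsum]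
      push_cast
      ring
    rw [step2]
    have hint2 : Integrable (fun ω => ((ε v ω * ε v ω : ℕ) : ℝ)) μ := by
      refine (hεmom2 v).congr (Filter.Eventually.of_forall fun ω => ?_)
      push_cast
      ring
    rw [lintegral_natCast_eq_ofReal_integral μ _ hint2]
    congr 1
    rw [← hm2 v]
    refine integral_congr_ae (Filter.Eventually.of_forall fun ω => ?_)
    push_cast
    ring
  have hI2diag : ∀ v r, I2 v r r = P v r := by
    intro v r
    rw [hI2def, ← hPint v r]
    exact lintegral_congr fun ω => by by_cases h : r < ε v ω <;> simp [h]
  -- Z integrals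
  have hZlin : ∀ v r, ∀ p ∈ W, ∫⁻ ω, (Z v r p ω : ℝ≥0∞) ∂μ = ENNReal.ofReal (β p) := by
    intro v r p hp
    rw [lintegral_cast01 μ _ (hZmeas v r p) (hZ01 v r p), hZlaw v r p hp]
  have hZZ : ∀ (v v' : ℤ × ℤ) (r r' : ℕ) (p p' : ℤ × ℤ), ((v, r) : (ℤ × ℤ) × ℕ) ≠ (v', r') →
      p ∈ W → p' ∈ W →
      ∫⁻ ω, (Z v r p ω : ℝ≥0∞) * (Z v' r' p' ω : ℝ≥0∞) ∂μ
        = ENNReal.ofReal (β p) * ENNReal.ofReal (β p') := by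
    intro v v' r r' p p' hne hp hp'
    have hfun := (hZindep.indepFun hne).comp
      (φ := fun g : ℤ × ℤ → ℕ => ((g p : ℝ≥0∞)))
      (ψ := fun g : ℤ × ℤ → ℕ => ((g p' : ℝ≥0∞)))
      ((measurable_from_top (f := fun n : ℕ => (n : ℝ≥0∞))).comp (measurable_pi_apply p))
      ((measurable_from_top (f := fun n : ℕ => (n : ℝ≥0∞))).comp (measurable_pi_apply p'))
    have := lintegral_mul_eq_lintegral_mul_lintegral_of_indepFun
      (μ := μ) (hZcastmeas v r p) (hZcastmeas v' r' p') hfun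
    simp only [Pi.mul_apply] at this
    rw [this, hZlin v r p hp, hZlin v' r' p' hp']
  have hZZ0 : ∀ (v : ℤ × ℤ) (r : ℕ) (p p' : ℤ × ℤ), p ≠ p' → p ∈ W → p' ∈ W →
      ∀ ω, Z v r p ω * Z v r p' ω = 0 := by
    intro v r p p' hne hp hp' ω
    have hsub : ({p, p'} : Finset (ℤ × ℤ)) ⊆ W := by
      intro q hq
      rcases Finset.mem_insert.1 hq with h | h
      · exact h ▸ hp
      · exact (Finset.mem_singleton.1 h) ▸ hp'
    have hle : Z v r p ω + Z v r p' ω ≤ ∑ q ∈ W, Z v r q ω := by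
      rw [← Finset.sum_pair (f := fun q => Z v r q ω) hne]
      exact Finset.sum_le_sum_of_subset hsub
    have := le_trans hle (hspread v r ω)
    have h01 : Z v r p ω = 0 ∨ Z v r p' ω = 0 := by omega
    rcases h01 with h | h <;> simp [h]
  -- factorization of mixed ε/Z integrals
  have hIJ : ∀ (v v' : ℤ × ℤ) (r r' : ℕ) (p p' : ℤ × ℤ),
      ∫⁻ ω, ((if r < ε v ω then (1:ℝ≥0∞) else 0) * (if r' < ε v' ω then (1:ℝ≥0∞) else 0))
          * ((Z v r p ω : ℝ≥0∞) * (Z v' r' p' ω : ℝ≥0∞)) ∂μ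
        = (∫⁻ ω, (if r < ε v ω then (1:ℝ≥0∞) else 0)
            * (if r' < ε v' ω then (1:ℝ≥0∞) else 0) ∂μ)
          * ∫⁻ ω, (Z v r p ω : ℝ≥0∞) * (Z v' r' p' ω : ℝ≥0∞) ∂μ := by
    intro v v' r r' p p'
    have hφ : Measurable (fun g : (((ℤ × ℤ) × ℕ) × (ℤ × ℤ)) → ℕ =>
        ((g ((v, r), p) : ℝ≥0∞)) * ((g ((v', r'), p') : ℝ≥0∞))) :=
      (((measurable_from_top (f := fun n : ℕ => (n : ℝ≥0∞))).comp
        (measurable_pi_apply _))).mul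
        (((measurable_from_top (f := fun n : ℕ => (n : ℝ≥0∞))).comp (measurable_pi_apply _)))
    have hψ : Measurable (fun g : (ℤ × ℤ) → ℕ =>
        (if r < g v then (1:ℝ≥0∞) else 0) * (if r' < g v' then (1:ℝ≥0∞) else 0)) :=
      (((measurable_from_top (f := fun n : ℕ => if r < n then (1:ℝ≥0∞) else 0)).comp
        (measurable_pi_apply _))).mul
        (((measurable_from_top (f := fun n : ℕ => if r' < n then (1:ℝ≥0∞) else 0)).comp
          (measurable_pi_apply _)))
    have hfun := (hZε.comp hφ hψ).symm
    have := lintegral_mul_eq_lintegral_mul_lintegral_of_indepFun (μ := μ)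
      ((hindmeas v r).mul (hindmeas v' r')) ((hZcastmeas v r p).mul (hZcastmeas v' r' p')) hfun
    simp only [Pi.mul_apply] at this
    exact this
  have hc_int : ∀ (v : ℤ × ℤ) (r : ℕ), ∀ p ∈ W,
      ∫⁻ ω, c v r p ω ∂μ = P v r * ENNReal.ofReal (β p) := by
    intro v r p hp
    have hφ : Measurable (fun g : (((ℤ × ℤ) × ℕ) × (ℤ × ℤ)) → ℕ =>
        ((g ((v, r), p) : ℝ≥0∞))) :=
      (measurable_from_top (f := fun n : ℕ => (n : ℝ≥0∞))).comp (measurable_pi_apply _)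
    have hψ : Measurable (fun g : (ℤ × ℤ) → ℕ => (if r < g v then (1:ℝ≥0∞) else 0)) :=
      (measurable_from_top (f := fun n : ℕ => if r < n then (1:ℝ≥0∞) else 0)).comp
        (measurable_pi_apply _)
    have hfun := (hZε.comp hφ hψ).symm
    have h2 := lintegral_mul_eq_lintegral_mul_lintegral_of_indepFun (μ := μ)
      (hindmeas v r) (hZcastmeas v r p) hfun
    simp only [Pi.mul_apply] at h2
    rw [hcdef]
    simp only []
    rw [h2, hPint v r, hZlin v r p hp]
  have hIfac : ∀ (v v' : ℤ × ℤ) (r r' : ℕ), v ≠ v' →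
      ∫⁻ ω, (if r < ε v ω then (1:ℝ≥0∞) else 0) * (if r' < ε v' ω then (1:ℝ≥0∞) else 0) ∂μ
        = P v r * P v' r' := by
    intro v v' r r' hne
    have hfun := (hεindep.indepFun hne).comp
      (φ := fun n : ℕ => if r < n then (1:ℝ≥0∞) else 0)
      (ψ := fun n : ℕ => if r' < n then (1:ℝ≥0∞) else 0)
      measurable_from_top measurable_from_top
    have h2 := lintegral_mul_eq_lintegral_mul_lintegral_of_indepFun (μ := μ)
      (hindmeas v r) (hindmeas v' r') hfun
    simp only [Pi.mul_apply] at h2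
    rw [h2, hPint v r, hPint v' r']
  -- expectation of Y
  have hYint : ∀ (a b : ℤ), ∀ p ∈ W,
      ∫⁻ ω, Y a b p ω ∂μ = ENNReal.ofReal με * ENNReal.ofReal (β p) := by
    intro a b p hp
    rw [hYdef]
    simp only []
    rw [lintegral_tsum fun r => (hcmeas _ r p).aemeasurable,
      tsum_congr fun r => hc_int _ r p hp, ENNReal.tsum_mul_right, hPsum]
  -- the per-pair product expectation
  set T : ℤ × ℤ → ℤ × ℤ → ℝ≥0∞ := fun p p' =>
    ∫⁻ ω, Y s t p ω * Y (s + k) (t + l) p' ω ∂μ with hTdef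
  set Tval : ℤ × ℤ → ℤ × ℤ → ℝ := fun p p' =>
    if p'.1 = p.1 + k ∧ p'.2 = p.2 + l then (m2R - με) * (β p * β p')
    else (με * β p) * (με * β p') with hTvaldef
  have hTval_nonneg : ∀ p ∈ W, ∀ p' ∈ W, 0 ≤ Tval p p' := by
    intro p hp p' hp'
    have hb := (hβ p hp).1
    have hb' := (hβ p' hp').1
    rw [hTvaldef]
    simp only []
    split
    · exact mul_nonneg (by linarith) (mul_nonneg hb hb')
    · exact mul_nonneg (mul_nonneg hμε0 hb) (mul_nonneg hμε0 hb')
  have hT : ∀ p ∈ W, ∀ p' ∈ W, T p p' = ENNReal.ofReal (Tval p p') := by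
    intro p hp p' hp'
    have hb := (hβ p hp).1
    have hb' := (hβ p' hp').1
    set v : ℤ × ℤ := (s - p.1, t - p.2) with hvdef
    set v' : ℤ × ℤ := (s + k - p'.1, t + l - p'.2) with hv'def
    set BB : ℝ≥0∞ := ENNReal.ofReal (β p) * ENNReal.ofReal (β p') with hBBdef
    have step1 : T p p' = ∑' (r : ℕ) (r' : ℕ), ∫⁻ ω, c v r p ω * c v' r' p' ω ∂μ := by
      rw [hTdef]
      simp only []
      have hpoint : ∀ ω, Y s t p ω * Y (s + k) (t + l) p' ω
          = ∑' (r : ℕ) (r' : ℕ), c v r p ω * c v' r' p' ω := by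
        intro ω
        rw [hYdef]
        simp only []
        rw [← ENNReal.tsum_mul_right]
        exact tsum_congr fun r => (ENNReal.tsum_mul_left).symm
      rw [lintegral_congr hpoint,
        lintegral_tsum (f := fun r ω => ∑' r' : ℕ, c v r p ω * c v' r' p' ω) fun r => (Measurable.ennreal_tsum fun r' =>
          (hcmeas v r p).mul (hcmeas v' r' p')).aemeasurable]
      exact tsum_congr fun r => lintegral_tsum fun r' =>
        ((hcmeas v r p).mul (hcmeas v' r' p')).aemeasurable
    have hterm : ∀ r r' : ℕ, ∫⁻ ω, c v r p ω * c v' r' p' ω ∂μ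
        = (∫⁻ ω, (if r < ε v ω then (1:ℝ≥0∞) else 0)
            * (if r' < ε v' ω then (1:ℝ≥0∞) else 0) ∂μ)
          * ∫⁻ ω, (Z v r p ω : ℝ≥0∞) * (Z v' r' p' ω : ℝ≥0∞) ∂μ := by
      intro r r'
      rw [← hIJ v v' r r' p p']
      refine lintegral_congr fun ω => ?_
      rw [hcdef]
      simp only []
      ring
    by_cases hcond : p'.1 = p.1 + k ∧ p'.2 = p.2 + l
    · -- diagonal case : same innovation site
      have hvv : v' = v := by
        rw [hvdef, hv'def, Prod.ext_iff]
        constructor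
        · simp only []
          omega
        · simp only []
          omega
      have hppne : p ≠ p' := by
        rintro rfl
        exact hkl ⟨by omega, by omega⟩
      have hterm2 : ∀ r r' : ℕ, ∫⁻ ω, c v r p ω * c v' r' p' ω ∂μ
          = if r = r' then 0 else I2 v r r' * BB := by
        intro r r'
        by_cases hrr : r = r'
        · subst hrr
          rw [if_pos rfl, hvv]
          have hzero : ∀ ω, c v r p ω * c v r p' ω = 0 := by
            intro ω
            have h0 := hZZ0 v r p p' hppne hp hp' ω
            have hz : ((Z v r p ω : ℝ≥0∞)) * (Z v r p' ω : ℝ≥0∞) = 0 := by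
              rw [← Nat.cast_mul, h0]
              simp
            rw [hcdef]
            simp only []
            calc ((if r < ε v ω then (1:ℝ≥0∞) else 0) * (Z v r p ω : ℝ≥0∞))
                * ((if r < ε v ω then (1:ℝ≥0∞) else 0) * (Z v r p' ω : ℝ≥0∞))
                = ((if r < ε v ω then (1:ℝ≥0∞) else 0) * (if r < ε v ω then (1:ℝ≥0∞) else 0))
                  * (((Z v r p ω : ℝ≥0∞)) * (Z v r p' ω : ℝ≥0∞)) := by ring
              _ = 0 := by rw [hz, mul_zero]
          rw [lintegral_congr hzero, lintegral_zero]
        · rw [if_neg hrr, hterm r r', hvv,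
            hZZ v v r r' p p' (fun e => hrr (congrArg Prod.snd e)) hp hp', hI2def, hBBdef]
      rw [step1, tsum_congr fun r => tsum_congr fun r' => hterm2 r r']
      have key : (∑' (r : ℕ) (r' : ℕ), (if r = r' then 0 else I2 v r r' * BB))
          + ENNReal.ofReal με * BB
          = ENNReal.ofReal m2R * BB := by
        have h1 : ENNReal.ofReal με * BB = ∑' (r : ℕ), I2 v r r * BB := by
          rw [ENNReal.tsum_mul_right, tsum_congr fun r => hI2diag v r, hPsum v]
        have h2 : ∑' (r : ℕ), I2 v r r * BB
            = ∑' (r : ℕ) (r' : ℕ), (if r = r' then I2 v r r' * BB else 0) := by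
          refine tsum_congr fun r => ?_
          rw [tsum_eq_single r (fun r' (hne : r' ≠ r) =>
            if_neg (fun e : r = r' => hne e.symm)), if_pos rfl]
        rw [h1, h2, ← ENNReal.tsum_add]
        rw [tsum_congr fun r => (ENNReal.tsum_add ..).symm]
        have h3 : ∀ r r' : ℕ, ((if r = r' then 0 else I2 v r r' * BB)
            + (if r = r' then I2 v r r' * BB else 0)) = I2 v r r' * BB := by
          intro r r'
          by_cases h : r = r' <;> simp [h]
        rw [tsum_congr fun r => tsum_congr fun r' => h3 r r']
        rw [tsum_congr fun r => ENNReal.tsum_mul_right, ENNReal.tsum_mul_right, hI2sum v]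
      have hfin : ENNReal.ofReal με * BB ≠ ⊤ :=
        ENNReal.mul_ne_top ENNReal.ofReal_ne_top
          (ENNReal.mul_ne_top ENNReal.ofReal_ne_top ENNReal.ofReal_ne_top)
      rw [ENNReal.eq_sub_of_add_eq hfin key]
      rw [hTvaldef]
      simp only [if_pos hcond]
      rw [hBBdef, ← ENNReal.ofReal_mul hb, ← ENNReal.ofReal_mul hm2R0, ← ENNReal.ofReal_mul hμε0,
        show (m2R - με) * (β p * β p') = m2R * (β p * β p') - με * (β p * β p') from by ring,
        ENNReal.ofReal_sub _ (mul_nonneg hμε0 (mul_nonneg hb hb'))]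
    · -- off-diagonal case : distinct innovation sites
      have hvv : v ≠ v' := by
        intro h
        rw [hvdef, hv'def, Prod.ext_iff] at h
        simp only [] at h
        exact hcond ⟨by omega, by omega⟩
      have hterm2 : ∀ r r' : ℕ, ∫⁻ ω, c v r p ω * c v' r' p' ω ∂μ
          = P v r * (P v' r' * BB) := by
        intro r r'
        rw [hterm r r', hIfac v v' r r' hvv,
          hZZ v v' r r' p p' (fun e => hvv (congrArg Prod.fst e)) hp hp', hBBdef]
        ring
      rw [step1, tsum_congr fun r => tsum_congr fun r' => hterm2 r r']
      rw [tsum_congr fun r => ENNReal.tsum_mul_left,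
        tsum_congr fun r => congrArg _ (by rw [ENNReal.tsum_mul_right, hPsum v']),
        ENNReal.tsum_mul_right, hPsum v]
      rw [hTvaldef]
      simp only [if_neg hcond]
      rw [ENNReal.ofReal_mul (mul_nonneg hμε0 hb), ENNReal.ofReal_mul hμε0,
        ENNReal.ofReal_mul hμε0, hBBdef]
      ring
  -- single expectations of X
  have hXmean : ∀ a b : ℤ, ∫ ω, (X a b ω : ℝ) ∂μ = με * ∑ p ∈ W, β p := by
    intro a b
    have h1 : ∫⁻ ω, ((X a b ω : ℝ≥0∞)) ∂μ = ENNReal.ofReal (∫ ω, (X a b ω : ℝ) ∂μ) :=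
      lintegral_natCast_eq_ofReal_integral μ _ (hXint a b)
    have h2 : ∫⁻ ω, ((X a b ω : ℝ≥0∞)) ∂μ = ENNReal.ofReal (με * ∑ p ∈ W, β p) := by
      rw [lintegral_congr fun ω => hXcast a b ω,
        lintegral_finset_sum W (fun p _ => hYmeas a b p),
        Finset.sum_congr rfl (fun p hp => hYint a b p hp), ← Finset.mul_sum,
        ← ENNReal.ofReal_sum_of_nonneg (fun p hp => (hβ p hp).1), ← ENNReal.ofReal_mul hμε0]
    have h3 := h1.symm.trans h2
    exact (ENNReal.ofReal_eq_ofReal_iff (integral_nonneg fun ω => by positivity)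
      (mul_nonneg hμε0 (Finset.sum_nonneg fun p hp => (hβ p hp).1))).1 h3
  -- product expectation
  have hXXint : Integrable (fun ω => (X s t ω : ℝ) * (X (s + k) (t + l) ω : ℝ)) μ := by
    refine Integrable.mono ((hXmom2 s t).add (hXmom2 (s + k) (t + l)))
      ((((measurable_from_top (f := fun n : ℕ => (n : ℝ))).comp (hXmeas s t)).mul
        ((measurable_from_top (f := fun n : ℕ => (n : ℝ))).comp
          (hXmeas (s + k) (t + l)))).aestronglyMeasurable)
      (Filter.Eventually.of_forall fun ω => ?_)
    simp only [Pi.add_apply]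
    rw [Real.norm_eq_abs, Real.norm_eq_abs,
      abs_of_nonneg (by positivity : (0:ℝ) ≤ (X s t ω : ℝ) * (X (s + k) (t + l) ω : ℝ)),
      abs_of_nonneg (by positivity)]
    nlinarith [sq_nonneg ((X s t ω : ℝ) - (X (s + k) (t + l) ω : ℝ))]
  have hXXmean : ∫ ω, (X s t ω : ℝ) * (X (s + k) (t + l) ω : ℝ) ∂μ
      = ∑ p ∈ W, ∑ p' ∈ W, Tval p p' := by
    have hXXnat : Integrable (fun ω => ((X s t ω * X (s + k) (t + l) ω : ℕ) : ℝ)) μ :=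
      hXXint.congr (Filter.Eventually.of_forall fun ω => by push_cast; ring)
    have h1 : ∫⁻ ω, ((X s t ω * X (s + k) (t + l) ω : ℕ) : ℝ≥0∞) ∂μ
        = ENNReal.ofReal (∫ ω, ((X s t ω * X (s + k) (t + l) ω : ℕ) : ℝ) ∂μ) :=
      lintegral_natCast_eq_ofReal_integral μ _ hXXnat
    have h2 : ∫⁻ ω, ((X s t ω * X (s + k) (t + l) ω : ℕ) : ℝ≥0∞) ∂μ
        = ∑ p ∈ W, ∑ p' ∈ W, T p p' := by
      have hpt : ∀ ω, ((X s t ω * X (s + k) (t + l) ω : ℕ) : ℝ≥0∞)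
          = ∑ p ∈ W, ∑ p' ∈ W, Y s t p ω * Y (s + k) (t + l) p' ω := by
        intro ω
        push_cast
        rw [hXcast s t ω, hXcast (s + k) (t + l) ω, Finset.sum_mul_sum]
      rw [lintegral_congr hpt,
        lintegral_finset_sum W (f := fun p ω => ∑ p' ∈ W, Y s t p ω * Y (s + k) (t + l) p' ω)
          (fun p _ => Finset.measurable_sum W fun p' _ =>
          (hYmeas s t p).mul (hYmeas (s + k) (t + l) p'))]
      exact Finset.sum_congr rfl fun p _ => lintegral_finset_sum W fun p' _ =>
        (hYmeas s t p).mul (hYmeas (s + k) (t + l) p')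
    have h3 : (∑ p ∈ W, ∑ p' ∈ W, T p p') = ENNReal.ofReal (∑ p ∈ W, ∑ p' ∈ W, Tval p p') := by
      rw [ENNReal.ofReal_sum_of_nonneg (fun p hp => Finset.sum_nonneg fun p' hp' =>
        hTval_nonneg p hp p' hp')]
      refine Finset.sum_congr rfl fun p hp => ?_
      rw [ENNReal.ofReal_sum_of_nonneg (fun p' hp' => hTval_nonneg p hp p' hp')]
      exact Finset.sum_congr rfl fun p' hp' => hT p hp p' hp'
    have h4 := (h1.symm.trans (h2.trans h3))
    have h5 := (ENNReal.ofReal_eq_ofReal_iff (integral_nonneg fun ω => by positivity)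
      (Finset.sum_nonneg fun p hp => Finset.sum_nonneg fun p' hp' =>
        hTval_nonneg p hp p' hp')).1 h4
    rw [← h5]
    exact integral_congr_ae (Filter.Eventually.of_forall fun ω => by push_cast; ring)
  -- final assembly
  rw [hXXmean, hXmean s t, hXmean (s + k) (t + l)]
  have hsplit : (με * ∑ p ∈ W, β p) * (με * ∑ p ∈ W, β p)
      = ∑ p ∈ W, ∑ p' ∈ W, (με * β p) * (με * β p') := by
    simp only [Finset.mul_sum, Finset.sum_mul]
    rw [Finset.sum_comm]
  rw [hsplit, ← Finset.sum_sub_distrib]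
  rw [Finset.sum_congr rfl fun p hp => (Finset.sum_sub_distrib _ _).symm]
  have hpt : ∀ p ∈ W, ∀ p' ∈ W, Tval p p' - (με * β p) * (με * β p')
      = if p'.1 = p.1 + k ∧ p'.2 = p.2 + l then (σε2 - με) * (β p * β p') else 0 := by
    intro p hp p' hp'
    rw [hTvaldef]
    simp only []
    split
    · rw [hm2Rdef]; ring
    · ring
  rw [Finset.sum_congr rfl fun p hp => Finset.sum_congr rfl fun p' hp' => hpt p hp p' hp']
  rw [Finset.sum_comm]
  have hinner : ∀ p' ∈ W, (∑ p ∈ W,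
      if p'.1 = p.1 + k ∧ p'.2 = p.2 + l then (σε2 - με) * (β p * β p') else 0)
      = if ((p'.1 - k, p'.2 - l) : ℤ × ℤ) ∈ W
          then (σε2 - με) * (β (p'.1 - k, p'.2 - l) * β p') else 0 := by
    intro p' hp'
    rw [Finset.sum_congr rfl fun p hp => if_congr
      (show (p'.1 = p.1 + k ∧ p'.2 = p.2 + l) ↔ p = ((p'.1 - k, p'.2 - l) : ℤ × ℤ) by
        rw [Prod.ext_iff]; constructor
        · rintro ⟨h1, h2⟩; exact ⟨by dsimp only; omega, by dsimp only; omega⟩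
        · rintro ⟨h1, h2⟩; dsimp only at h1 h2; constructor <;> omega) rfl rfl]
    rw [Finset.sum_ite_eq' W ((p'.1 - k, p'.2 - l) : ℤ × ℤ)
      (fun p => (σε2 - με) * (β p * β p'))]
  rw [Finset.sum_congr rfl hinner]
  have hWfilter : W ∩ lagWindow q₁ q₂ k l
      = W.filter (fun p' => ((p'.1 - k, p'.2 - l) : ℤ × ℤ) ∈ W) := by
    ext p'
    simp only [Finset.mem_inter, Finset.mem_filter, hWdef, mem_lagWindow]
    omega
  rw [hWfilter, Finset.mul_sum, Finset.sum_filter]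
  exact Finset.sum_congr rfl fun p' hp' => by split <;> ring
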